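/- For every integer k ≥ 2, there exists a finite partially ordered set P with exactly 2^{k+1} + 12 elements whose automorphism group Aut(P) is isomorphic to the cyclic group Z/2^k. -/

import Mathlib

namespace CG

inductive Pz (n : ℕ) : Type
  | A : ZMod n → Pz n
  | B : ZMod n → Pz n
  | C : ZMod 4 → Pz n
  | D : ZMod 4 → Pz n
  | E : ZMod 4 → Pz n

namespace Pz

variable {n : ℕ}

def po : ZMod n → ZMod 4 := fun i => ZMod.cast i

lemma po_eq (h : 4 ∣ n) (a : ZMod n) : po a = ZMod.castHom h (ZMod 4) a := rfl

lemma po_add (h : 4 ∣ n) (a b : ZMod n) : po (a + b) = po a + po b := by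
  simp [po_eq h, map_add]

lemma po_one (h : 4 ∣ n) : po (1 : ZMod n) = 1 :=
  map_one (ZMod.castHom h (ZMod 4))

lemma po_natCast (h : 4 ∣ n) (m : ℕ) : po ((m : ZMod n)) = (m : ZMod 4) := by
  simp [po_eq h, map_natCast]

lemma po_surj (h : 4 ∣ n) [NeZero n] : Function.Surjective (po (n := n)) := by
  intro x
  refine ⟨(x.val : ZMod n), ?_⟩
  rw [po_natCast h]
  exact ZMod.natCast_rightInverse x

def le : Pz n → Pz n → Prop
  | .A i, .A i' => i = i'
  | .A i, .B j => j = i ∨ j = i + 1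
  | .A i, .C j => j = po i ∨ j = po i + 1
  | .A i, .D j => j = po i ∨ j = po i + 1
  | .A i, .E j => j = po i ∨ j = po i + 1 ∨ j = po i + 2
  | .B i, .B i' => i = i'
  | .B i, .C j => j = po i
  | .B i, .D j => j = po i
  | .B i, .E j => j = po i ∨ j = po i + 1
  | .C j, .C j' => j = j'
  | .C j, .D j' => j' = j
  | .C j, .E j' => j' = j ∨ j' = j + 1
  | .D j, .D j' => j = j'
  | .D j, .E j' => j' = j
  | .E j, .E j' => j = j'
  | _, _ => False

def pOrder (h : 4 ∣ n) : PartialOrder (Pz n) where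
  le := le
  le_refl x := by cases x <;> simp [le]
  le_antisymm x y hxy hyx := by
    cases x <;> cases y <;> simp_all [le]
  le_trans x y z hxy hyz := by
    have h1 : (1 : ZMod 4) + 1 = 2 := by decide
    cases x <;> cases y <;> cases z <;>
      simp_all only [le, po_add h, po_one h] <;>
      rcases hxy with rfl | rfl | rfl <;>
      rcases hyz with rfl | rfl | rfl <;>
      simp [po_add h, po_one h, add_assoc, h1]


def lv : Pz n → ℕ
  | .A _ => 0 | .B _ => 1 | .C _ => 2 | .D _ => 3 | .E _ => 4

lemma lv_le (x : Pz n) : lv x ≤ 4 := by cases x <;> simp [lv]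

lemma lt_lv {x y : Pz n} (hxy : le x y) (hne : x ≠ y) : lv x < lv y := by
  cases x <;> cases y <;> simp_all [le, lv]

/-- strict relation -/
def slt (x y : Pz n) : Prop := le x y ∧ x ≠ y

/-- there is a strict chain of length m above x -/
def Q : ℕ → Pz n → Prop
  | 0, _ => True
  | m + 1, x => ∃ y, slt x y ∧ Q m y

lemma Q_imp {m : ℕ} {x : Pz n} (hq : Q m x) : lv x + m ≤ 4 := by
  induction m generalizing x with
  | zero => simpa using lv_le x
  | succ m ih =>
    obtain ⟨y, ⟨hle, hne⟩, hy⟩ := hq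
    have := lt_lv hle hne
    have := ih hy
    omega

lemma Q_of (m : ℕ) (x : Pz n) (hx : lv x + m ≤ 4) : Q m x := by
  induction m generalizing x with
  | zero => trivial
  | succ m ih =>
    cases x with
    | A i =>
      exact ⟨.B i, ⟨by simp [le], by simp⟩, ih _ (by simp [lv]; simp [lv] at hx; omega)⟩
    | B i =>
      exact ⟨.C (po i), ⟨by simp [le], by simp⟩, ih _ (by simp [lv]; simp [lv] at hx; omega)⟩
    | C j =>
      exact ⟨.D j, ⟨by simp [le], by simp⟩, ih _ (by simp [lv]; simp [lv] at hx; omega)⟩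
    | D j =>
      exact ⟨.E j, ⟨by simp [le], by simp⟩, ih _ (by simp [lv]; simp [lv] at hx; omega)⟩
    | E j => simp [lv] at hx

lemma po_sub_one (h : 4 ∣ n) (a : ZMod n) : po (a - 1) = po a - 1 := by
  have := po_add h (a - 1) 1
  rw [sub_add_cancel, po_one h] at this
  linear_combination -this

def rotF (t : ZMod n) : Pz n → Pz n
  | .A i => .A (i + t)
  | .B i => .B (i + t)
  | .C j => .C (j + po t)
  | .D j => .D (j + po t)
  | .E j => .E (j + po t)

lemma rotF_comp (h : 4 ∣ n) (s t : ZMod n) (x : Pz n) :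
    rotF t (rotF s x) = rotF (s + t) x := by
  cases x <;> simp [rotF, po_add h, add_assoc]

lemma rotF_zero (h : 4 ∣ n) (x : Pz n) : rotF 0 x = x := by
  have h0 : po (0 : ZMod n) = 0 := map_zero (ZMod.castHom h (ZMod 4))
  cases x <;> simp [rotF, h0]

lemma rotF_mono (h : 4 ∣ n) (t : ZMod n) {x y : Pz n} (hxy : le x y) :
    le (rotF t x) (rotF t y) := by
  cases x <;> cases y <;>
    simp_all only [le, rotF, po_add h, po_one h] <;>
    rcases hxy with rfl | rfl | rfl <;>
    simp [po_add h, po_one h] <;> ring_nf <;> simp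

lemma rotF_le_iff (h : 4 ∣ n) (t : ZMod n) (x y : Pz n) :
    le (rotF t x) (rotF t y) ↔ le x y := by
  refine ⟨fun hh => ?_, rotF_mono h t⟩
  have := rotF_mono h (-t) hh
  rwa [rotF_comp h, rotF_comp h, add_neg_cancel, rotF_zero h, rotF_zero h] at this

lemma main (h : 4 ∣ n) (h0 : n ≠ 0) (f : Pz n ≃ Pz n)
    (hf : ∀ x y : Pz n, le (f x) (f y) ↔ le x y) :
    ∃ t : ZMod n, ∀ x, f x = rotF t x := by
  haveI : NeZero n := ⟨h0⟩
  have hinj := f.injective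
  -- chain predicate transfer
  have hQ : ∀ (m : ℕ) (x : Pz n), Q m (f x) ↔ Q m x := by
    intro m
    induction m with
    | zero => intro x; simp [Q]
    | succ m ih =>
      intro x
      constructor
      · rintro ⟨y, ⟨hle, hne⟩, hy⟩
        obtain ⟨y', rfl⟩ := f.surjective y
        exact ⟨y', ⟨(hf x y').1 hle, fun e => hne (by rw [e])⟩, (ih y').1 hy⟩
      · rintro ⟨y, ⟨hle, hne⟩, hy⟩
        exact ⟨f y, ⟨(hf x y).2 hle, fun e => hne (hinj e)⟩, (ih y).2 hy⟩
  have hlv : ∀ x, lv (f x) = lv x := by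
    intro x
    have q1 : lv x + (4 - lv x) ≤ 4 := by have := lv_le x; omega
    have q2 : lv (f x) + (4 - lv x) ≤ 4 := Q_imp ((hQ _ x).2 (Q_of _ _ q1))
    have q3 : lv (f x) + (4 - lv (f x)) ≤ 4 := by have := lv_le (f x); omega
    have q4 : lv x + (4 - lv (f x)) ≤ 4 := Q_imp ((hQ _ x).1 (Q_of _ _ q3))
    have := lv_le x; have := lv_le (f x)
    omega
  -- shape extraction
  have hA : ∀ i, ∃ i', f (.A i) = .A i' := by
    intro i
    have hl := hlv (.A i)
    rcases hfa : f (.A i) with i' | i' | j' | j' | j' <;> rw [hfa] at hl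
    · exact ⟨i', rfl⟩
    all_goals simp [lv] at hl
  have hB : ∀ i, ∃ i', f (.B i) = .B i' := by
    intro i
    have hl := hlv (.B i)
    rcases hfa : f (.B i) with i' | i' | j' | j' | j' <;> rw [hfa] at hl
    case B => exact ⟨i', rfl⟩
    all_goals simp [lv] at hl
  have hC : ∀ j, ∃ j', f (.C j) = .C j' := by
    intro j
    have hl := hlv (.C j)
    rcases hfa : f (.C j) with i' | i' | j' | j' | j' <;> rw [hfa] at hl
    case C => exact ⟨j', rfl⟩
    all_goals simp [lv] at hl
  have hD : ∀ j, ∃ j', f (.D j) = .D j' := by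
    intro j
    have hl := hlv (.D j)
    rcases hfa : f (.D j) with i' | i' | j' | j' | j' <;> rw [hfa] at hl
    case D => exact ⟨j', rfl⟩
    all_goals simp [lv] at hl
  have hE : ∀ j, ∃ j', f (.E j) = .E j' := by
    intro j
    have hl := hlv (.E j)
    rcases hfa : f (.E j) with i' | i' | j' | j' | j' <;> rw [hfa] at hl
    case E => exact ⟨j', rfl⟩
    all_goals simp [lv] at hl
  choose α hα using hA
  choose β hβ using hB
  choose γ hγ using hC
  choose δ hδ using hD
  choose ε hε using hE
  have hβinj : Function.Injective β := by
    intro a b e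
    have : f (.B a) = f (.B b) := by rw [hβ a, hβ b, e]
    simpa using hinj this
  have hγinj : Function.Injective γ := by
    intro a b e
    have : f (.C a) = f (.C b) := by rw [hγ a, hγ b, e]
    simpa using hinj this
  -- transferred constraints
  have hAB : ∀ i j : ZMod n, (β j = α i ∨ β j = α i + 1) ↔ (j = i ∨ j = i + 1) := by
    intro i j
    have := hf (.A i) (.B j)
    rw [hα i, hβ j] at this
    simpa [le] using this
  have hBC : ∀ (i : ZMod n) (x : ZMod 4), (γ x = po (β i)) ↔ (x = po i) := by
    intro i x
    have := hf (.B i) (.C x)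
    rw [hβ i, hγ x] at this
    simpa [le] using this
  have hCD : ∀ (j x : ZMod 4), (δ x = γ j) ↔ (x = j) := by
    intro j x
    have := hf (.C j) (.D x)
    rw [hγ j, hδ x] at this
    simpa [le] using this
  have hDE : ∀ (j x : ZMod 4), (ε x = δ j) ↔ (x = j) := by
    intro j x
    have := hf (.D j) (.E x)
    rw [hδ j, hε x] at this
    simpa [le] using this
  have hCE : ∀ (j x : ZMod 4), (ε x = γ j ∨ ε x = γ j + 1) ↔ (x = j ∨ x = j + 1) := by
    intro j x
    have := hf (.C j) (.E x)
    rw [hγ j, hε x] at this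
    simpa [le] using this
  have hδγ : ∀ j, δ j = γ j := fun j => (hCD j j).2 rfl
  have hεδ : ∀ j, ε j = δ j := fun j => (hDE j j).2 rfl
  have hγstep : ∀ j : ZMod 4, γ (j + 1) = γ j + 1 := by
    intro j
    have hj := (hCE j (j + 1)).2 (Or.inr rfl)
    rw [hεδ, hδγ] at hj
    rcases hj with e | e
    · have e2 := hγinj e
      have : (1 : ZMod 4) = 0 := by linear_combination e2
      exact absurd this (by decide)
    · exact e
  -- ZMod n numerals
  have h4n : 4 ≤ n := Nat.le_of_dvd (Nat.pos_of_ne_zero h0) h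
  have htwo : (2 : ZMod n) ≠ 0 := by
    intro e
    have : ((2 : ℕ) : ZMod n) = 0 := by exact_mod_cast e
    have := Nat.le_of_dvd (by norm_num) ((ZMod.natCast_eq_zero_iff 2 n).1 this)
    omega
  have hone : (1 : ZMod n) ≠ 0 := by
    intro e
    have : ((1 : ℕ) : ZMod n) = 0 := by exact_mod_cast e
    have := Nat.le_of_dvd (by norm_num) ((ZMod.natCast_eq_zero_iff 1 n).1 this)
    omega
  have hcast : ∀ i : ZMod n, ∃ m : ℕ, (m : ZMod n) = i :=
    fun i => ⟨i.val, ZMod.natCast_rightInverse i⟩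
  have hγpo : ∀ i : ZMod n, γ (po i) = po (β i) := fun i => (hBC i (po i)).2 rfl
  -- the crown set relation
  have hset : ∀ i : ZMod n,
      (β i = α i ∧ β (i + 1) = α i + 1) ∨ (β i = α i + 1 ∧ β (i + 1) = α i) := by
    intro i
    have h1 := (hAB i i).2 (Or.inl rfl)
    have h2 := (hAB i (i + 1)).2 (Or.inr rfl)
    have hne : β i ≠ β (i + 1) := by
      intro e
      have := hβinj e
      exact hone (by linear_combination -this)
    rcases h1 with e1 | e1 <;> rcases h2 with e2 | e2
    · exact absurd (e1.trans e2.symm) hne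
    · exact Or.inl ⟨e1, e2⟩
    · exact Or.inr ⟨e1, e2⟩
    · exact absurd (e1.trans e2.symm) hne
  have hstepP : ∀ i : ZMod n, β (i + 1) = β i + 1 → β (i + 1 + 1) = β (i + 1) + 1 := by
    intro i hi
    rcases hset (i + 1) with ⟨e1, e2⟩ | ⟨e1, e2⟩
    · rw [e2, ← e1]
    · exfalso
      have hcontra : β (i + 1 + 1) = β i := by linear_combination e2 - e1 + hi
      have e3 := hβinj hcontra
      exact htwo (by linear_combination e3)
  have hstepM : ∀ i : ZMod n, β (i + 1) = β i - 1 → β (i + 1 + 1) = β (i + 1) - 1 := by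
    intro i hi
    rcases hset (i + 1) with ⟨e1, e2⟩ | ⟨e1, e2⟩
    · exfalso
      have hcontra : β (i + 1 + 1) = β i := by linear_combination e2 - e1 + hi
      have e3 := hβinj hcontra
      exact htwo (by linear_combination e3)
    · linear_combination e2 - e1
  rcases hset 0 with ⟨e1, e2⟩ | ⟨e1, e2⟩
  · -- rotation case
    have base : β ((0 : ZMod n) + 1) = β 0 + 1 := by rw [e2, e1]
    have hall : ∀ m : ℕ, β ((m : ZMod n) + 1) = β (m : ZMod n) + 1 := by
      intro m
      induction m with
      | zero => simpa using base
      | succ m ih =>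
        have := hstepP _ ih
        simpa [Nat.cast_succ] using this
    have hstep_all : ∀ i : ZMod n, β (i + 1) = β i + 1 := by
      intro i
      obtain ⟨m, rfl⟩ := hcast i
      exact hall m
    have hlin : ∀ i : ZMod n, β i = β 0 + i := by
      have hm : ∀ m : ℕ, β (m : ZMod n) = β 0 + m := by
        intro m
        induction m with
        | zero => simp
        | succ m ih => rw [Nat.cast_succ, hstep_all, ih, add_assoc]
      intro i
      obtain ⟨m, rfl⟩ := hcast i
      exact hm m
    have hαβ : ∀ i, α i = β i := by
      intro i
      rcases hset i with ⟨u1, u2⟩ | ⟨u1, u2⟩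
      · rw [u1]
      · exfalso
        have hs := hstep_all i
        rw [u2, u1] at hs
        exact htwo (by linear_combination -hs)
    refine ⟨β 0, ?_⟩
    have hγall : ∀ x : ZMod 4, γ x = x + po (β 0) := by
      intro x
      obtain ⟨i, rfl⟩ := po_surj h x
      rw [hγpo i, hlin i, po_add h, add_comm]
    intro x
    cases x with
    | A i => rw [hα i, hαβ i, hlin i]; simp [rotF, add_comm]
    | B i => rw [hβ i, hlin i]; simp [rotF, add_comm]
    | C j => rw [hγ j, hγall j]; simp [rotF]
    | D j => rw [hδ j, hδγ j, hγall j]; simp [rotF]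
    | E j => rw [hε j, hεδ j, hδγ j, hγall j]; simp [rotF]
  · -- reflection case: contradiction
    exfalso
    have base : β ((0 : ZMod n) + 1) = β 0 - 1 := by rw [e2, e1]; ring
    have hall : ∀ m : ℕ, β ((m : ZMod n) + 1) = β (m : ZMod n) - 1 := by
      intro m
      induction m with
      | zero => simpa using base
      | succ m ih =>
        have := hstepM _ ih
        simpa [Nat.cast_succ] using this
    have hstep_all : ∀ i : ZMod n, β (i + 1) = β i - 1 := by
      intro i
      obtain ⟨m, rfl⟩ := hcast i
      exact hall m
    have c1 : γ (po ((0 : ZMod n) + 1)) = po (β ((0 : ZMod n) + 1)) := hγpo _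
    rw [po_add h, po_one h, hγstep, hγpo 0, hstep_all 0, po_sub_one h] at c1
    have : (2 : ZMod 4) = 0 := by linear_combination c1
    exact absurd this (by decide)

def idxA : Pz n → ZMod n
  | .A i => i
  | _ => 0

def pzEquiv (n : ℕ) : Pz n ≃ ((ZMod n ⊕ ZMod n) ⊕ (ZMod 4 ⊕ ZMod 4 ⊕ ZMod 4)) where
  toFun x := match x with
    | .A i => .inl (.inl i)
    | .B i => .inl (.inr i)
    | .C j => .inr (.inl j)
    | .D j => .inr (.inr (.inl j))
    | .E j => .inr (.inr (.inr j))
  invFun x := match x with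
    | .inl (.inl i) => .A i
    | .inl (.inr i) => .B i
    | .inr (.inl j) => .C j
    | .inr (.inr (.inl j)) => .D j
    | .inr (.inr (.inr j)) => .E j
  left_inv x := by cases x <;> rfl
  right_inv x := by rcases x with (i | i) | (j | j | j) <;> rfl

end Pz
end CG

/-- For every integer `k ≥ 2`, there exists a finite poset `P` with exactly
`2 ^ (k + 1) + 12` elements whose automorphism group is isomorphic to the cyclic group
`ℤ/2^k`. -/
theorem exists_poset_aut_iso_zmod_two_pow (k : ℕ) (hk : 2 ≤ k) :
    ∃ (P : Type) (_ : PartialOrder P) (_ : Fintype P),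
      Fintype.card P = 2 ^ (k + 1) + 12 ∧
      Nonempty ((P ≃o P) ≃* Multiplicative (ZMod (2 ^ k))) := by
  have h : 4 ∣ 2 ^ k := by
    have h2 : (2 : ℕ) ^ 2 ∣ 2 ^ k := pow_dvd_pow 2 hk
    simpa using h2
  have h0 : (2 : ℕ) ^ k ≠ 0 := by positivity
  haveI : NeZero (2 ^ k) := ⟨h0⟩
  letI instP : PartialOrder (CG.Pz (2 ^ k)) := CG.Pz.pOrder h
  letI instF : Fintype (CG.Pz (2 ^ k)) := Fintype.ofEquiv _ (CG.Pz.pzEquiv (2 ^ k)).symm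
  refine ⟨CG.Pz (2 ^ k), instP, instF, ?_, ?_⟩
  · rw [Fintype.card_congr (CG.Pz.pzEquiv (2 ^ k))]
    simp only [Fintype.card_sum, ZMod.card]
    rw [pow_succ]
    ring
  · -- the rotations
    let rotIso : ZMod (2 ^ k) → (CG.Pz (2 ^ k) ≃o CG.Pz (2 ^ k)) := fun t =>
      { toEquiv :=
          { toFun := CG.Pz.rotF t
            invFun := CG.Pz.rotF (-t)
            left_inv := fun x => by
              rw [CG.Pz.rotF_comp h, add_neg_cancel, CG.Pz.rotF_zero h]
            right_inv := fun x => by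
              rw [CG.Pz.rotF_comp h, neg_add_cancel, CG.Pz.rotF_zero h] }
        map_rel_iff' := @fun x y => CG.Pz.rotF_le_iff h t x y }
    have rotIso_apply : ∀ (t : ZMod (2 ^ k)) (x : CG.Pz (2 ^ k)),
        rotIso t x = CG.Pz.rotF t x := fun t x => rfl
    have key : ∀ f : CG.Pz (2 ^ k) ≃o CG.Pz (2 ^ k), ∀ x,
        f x = CG.Pz.rotF (CG.Pz.idxA (f (.A 0))) x := by
      intro f
      obtain ⟨t, ht⟩ := CG.Pz.main h h0 f.toEquiv (fun x y => f.le_iff_le)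
      have h00 : CG.Pz.idxA (f (.A 0)) = t := by
        have := ht (.A 0)
        rw [show f.toEquiv (CG.Pz.A 0) = f (CG.Pz.A 0) from rfl] at this
        rw [this]
        simp [CG.Pz.rotF, CG.Pz.idxA]
      intro x
      rw [h00]
      exact ht x
    refine ⟨{
      toFun := fun f => Multiplicative.ofAdd (CG.Pz.idxA (f (.A 0)))
      invFun := fun t => rotIso (Multiplicative.toAdd t)
      left_inv := ?_
      right_inv := ?_
      map_mul' := ?_ }⟩
    · intro f
      apply OrderIso.ext
      funext x
      rw [rotIso_apply]
      exact (key f x).symm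
    · intro t
      show Multiplicative.ofAdd (CG.Pz.idxA (rotIso (Multiplicative.toAdd t) (.A 0))) = t
      rw [rotIso_apply]
      simp [CG.Pz.rotF, CG.Pz.idxA]
    · intro f g
      have e1 : (f * g) (CG.Pz.A 0) = f (g (CG.Pz.A 0)) := rfl
      show Multiplicative.ofAdd (CG.Pz.idxA ((f * g) (.A 0))) = _
      rw [e1, key g (.A 0)]
      show Multiplicative.ofAdd (CG.Pz.idxA (f (.A (0 + CG.Pz.idxA (g (.A 0)))))) = _
      rw [key f (.A (0 + CG.Pz.idxA (g (.A 0))))]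
      show Multiplicative.ofAdd ((0 + CG.Pz.idxA (g (.A 0))) + CG.Pz.idxA (f (.A 0))) = _
      rw [← ofAdd_add]
      exact congrArg Multiplicative.ofAdd (by simp [CG.Pz.rotF, CG.Pz.idxA, add_comm])
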